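/- Let (Ω, F, P) be a probability space, let k ≥ 1, and let X₀, X₁, …, X_k : Ω → ℝ be measurable random variables that are (jointly) independent. Then P(⋂_{i=1}^k {ω : X_i(ω) ≤ X₀(ω)}) ≥ ∏_{i=1}^k P({ω : X_i(ω) ≤ X₀(ω)}). -/

import Mathlib

open MeasureTheory ProbabilityTheory
open scoped ENNReal


lemma my_rearrange {a b c d : ℝ≥0∞} (hab : a ≤ b) (hcd : c ≤ d) :
    a * d + b * c ≤ a * c + b * d := by
  obtain ⟨e, rfl⟩ := exists_add_of_le hab
  obtain ⟨f, rfl⟩ := exists_add_of_le hcd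
  ring_nf
  exact le_self_add

lemma my_chebyshev (μ : Measure ℝ) [IsProbabilityMeasure μ] {f g : ℝ → ℝ≥0∞}
    (hfmono : Monotone f) (hgmono : Monotone g) (hf : Measurable f) (hg : Measurable g) :
    (∫⁻ x, f x ∂μ) * ∫⁻ x, g x ∂μ ≤ ∫⁻ x, f x * g x ∂μ := by
  have key : ∀ x y, f x * g y + f y * g x ≤ f x * g x + f y * g y := by
    intro x y
    rcases le_total x y with h | h
    · exact my_rearrange (hfmono h) (hgmono h)
    · rw [add_comm (f x * g y), add_comm (f x * g x)]
      exact my_rearrange (hfmono h) (hgmono h)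
  have h1 : ∫⁻ x, ∫⁻ y, (f x * g y + f y * g x) ∂μ ∂μ
      ≤ ∫⁻ x, ∫⁻ y, (f x * g x + f y * g y) ∂μ ∂μ :=
    lintegral_mono fun x => lintegral_mono fun y => key x y
  have hL : ∫⁻ x, ∫⁻ y, (f x * g y + f y * g x) ∂μ ∂μ
      = 2 * ((∫⁻ x, f x ∂μ) * ∫⁻ x, g x ∂μ) := by
    have e1 : ∀ x, ∫⁻ y, (f x * g y + f y * g x) ∂μ
        = f x * (∫⁻ y, g y ∂μ) + (∫⁻ y, f y ∂μ) * g x := by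
      intro x
      rw [lintegral_add_left (hg.const_mul _), lintegral_const_mul _ hg,
        lintegral_mul_const _ hf]
    simp_rw [e1]
    rw [lintegral_add_left (hf.mul_const _), lintegral_mul_const _ hf,
      lintegral_const_mul _ hg]
    ring
  have hR : ∫⁻ x, ∫⁻ y, (f x * g x + f y * g y) ∂μ ∂μ = 2 * ∫⁻ x, f x * g x ∂μ := by
    have e2 : ∀ x, ∫⁻ y, (f x * g x + f y * g y) ∂μ
        = f x * g x + ∫⁻ y, f y * g y ∂μ := by
      intro x
      rw [lintegral_add_left measurable_const, lintegral_const, measure_univ, mul_one]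
    simp_rw [e2]
    rw [lintegral_add_right _ measurable_const, lintegral_const, measure_univ, mul_one,
      two_mul]
  rw [hL, hR] at h1
  exact (ENNReal.mul_le_mul_iff_right two_ne_zero ENNReal.ofNat_ne_top).mp h1

lemma my_chebyshev_prod (μ : Measure ℝ) [IsProbabilityMeasure μ] {ι : Type*}
    (s : Finset ι) (f : ι → ℝ → ℝ≥0∞) (hmono : ∀ i, Monotone (f i))
    (hf : ∀ i, Measurable (f i)) :
    ∏ i ∈ s, ∫⁻ x, f i x ∂μ ≤ ∫⁻ x, ∏ i ∈ s, f i x ∂μ := by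
  classical
  induction s using Finset.cons_induction with
  | empty => simp
  | cons a s ha ih =>
    rw [Finset.prod_cons]
    have hpm : Monotone fun x => ∏ i ∈ s, f i x :=
      fun x y hxy => Finset.prod_le_prod' fun i _ => hmono i hxy
    have hpmeas : Measurable fun x => ∏ i ∈ s, f i x :=
      Finset.measurable_prod _ fun i _ => hf i
    calc (∫⁻ x, f a x ∂μ) * ∏ i ∈ s, ∫⁻ x, f i x ∂μ
        ≤ (∫⁻ x, f a x ∂μ) * ∫⁻ x, ∏ i ∈ s, f i x ∂μ := by
          exact mul_le_mul_right ih _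
      _ ≤ ∫⁻ x, f a x * ∏ i ∈ s, f i x ∂μ :=
          my_chebyshev μ (hmono a) hpm (hf a) hpmeas
      _ = ∫⁻ x, ∏ i ∈ Finset.cons a s ha, f i x ∂μ := by simp only [Finset.prod_cons]

/-- **Positive correlation of the events `{X_i ≤ X₀}`** (Section 4). If `X₀, X₁, …, X_k` are
jointly independent real random variables on a probability space `(Ω, F, P)`, then
`P(⋂_{i=1}^k {X_i ≤ X₀}) ≥ ∏_{i=1}^k P(X_i ≤ X₀)`. -/
theorem stmt_12 {Ω : Type*} [MeasurableSpace Ω] (P : Measure Ω)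
    [IsProbabilityMeasure P] (k : ℕ) (hk : 1 ≤ k)
    (X : Fin (k + 1) → Ω → ℝ) (hmeas : ∀ i, Measurable (X i))
    (hindep : iIndepFun X P) :
    ∏ i : Fin k, P {ω | X i.succ ω ≤ X 0 ω} ≤
      P (⋂ i : Fin k, {ω | X i.succ ω ≤ X 0 ω}) := by
  set ν : Fin (k + 1) → Measure ℝ := fun i => P.map (X i) with hν
  haveI : ∀ i, IsProbabilityMeasure (ν i) := fun i =>
    Measure.isProbabilityMeasure_map (hmeas i).aemeasurable
  set F : Fin k → ℝ → ℝ≥0∞ := fun i x => ν i.succ (Set.Iic x) with hF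
  have hFmono : ∀ i, Monotone (F i) := fun i x y hxy =>
    measure_mono (Set.Iic_subset_Iic.2 hxy)
  have hFmeas : ∀ i, Measurable (F i) := fun i => (hFmono i).measurable
  -- Step A : P {X i.succ ≤ X 0} = ∫ F i d(ν 0)
  have stepA : ∀ i : Fin k, P {ω | X i.succ ω ≤ X 0 ω} = ∫⁻ x, F i x ∂(ν 0) := by
    intro i
    have hind : IndepFun (X 0) (X i.succ) P :=
      hindep.indepFun (Fin.succ_ne_zero i).symm
    have hmap : P.map (fun ω => (X 0 ω, X i.succ ω)) = (ν 0).prod (ν i.succ) :=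
      (indepFun_iff_map_prod_eq_prod_map_map (hmeas 0).aemeasurable
        (hmeas i.succ).aemeasurable).mp hind
    have hs : MeasurableSet {p : ℝ × ℝ | p.2 ≤ p.1} :=
      measurableSet_le measurable_snd measurable_fst
    have : {ω | X i.succ ω ≤ X 0 ω}
        = (fun ω => (X 0 ω, X i.succ ω)) ⁻¹' {p : ℝ × ℝ | p.2 ≤ p.1} := rfl
    rw [this, ← Measure.map_apply ((hmeas 0).prodMk (hmeas i.succ)) hs, hmap,
      Measure.prod_apply hs]
    exact lintegral_congr fun x => by congr 1
  -- joint law is the product measure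
  have hjm : Measurable fun ω (i : Fin (k + 1)) => X i ω :=
    measurable_pi_lambda _ fun i => hmeas i
  have hpi : P.map (fun ω (i : Fin (k + 1)) => X i ω) = Measure.pi ν := by
    refine (Measure.pi_eq fun s hs => ?_).symm
    rw [Measure.map_apply hjm (MeasurableSet.univ_pi hs)]
    have hpre : (fun ω (i : Fin (k + 1)) => X i ω) ⁻¹' Set.pi Set.univ s
        = ⋂ i ∈ Finset.univ, X i ⁻¹' s i := by
      ext ω; simp [Set.mem_pi]
    rw [hpre, hindep.measure_inter_preimage_eq_mul Finset.univ fun i _ => hs i]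
    exact Finset.prod_congr rfl fun i _ =>
      (Measure.map_apply (hmeas i) (hs i)).symm
  -- Step B : P(⋂ {X i.succ ≤ X 0}) = ∫ ∏ F i d(ν 0)
  have stepB : P (⋂ i : Fin k, {ω | X i.succ ω ≤ X 0 ω})
      = ∫⁻ x, ∏ i : Fin k, F i x ∂(ν 0) := by
    set T : Set (Fin (k + 1) → ℝ) := ⋂ i : Fin k, {y | y i.succ ≤ y 0} with hTdef
    have hT : MeasurableSet T := MeasurableSet.iInter fun i =>
      measurableSet_le (measurable_pi_apply _) (measurable_pi_apply _)
    have hpre : (⋂ i : Fin k, {ω | X i.succ ω ≤ X 0 ω})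
        = (fun ω (i : Fin (k + 1)) => X i ω) ⁻¹' T := by
      ext ω; simp [hTdef]
    rw [hpre, ← Measure.map_apply hjm hT, hpi]
    set U : Set (ℝ × (Fin k → ℝ)) := ⋂ i : Fin k, {p | p.2 i ≤ p.1} with hUdef
    have hU : MeasurableSet U := MeasurableSet.iInter fun i =>
      measurableSet_le (measurable_snd.eval) measurable_fst
    have hmp := measurePreserving_piFinSuccAbove ν 0
    simp only [Fin.zero_succAbove] at hmp
    have hTU : T = (MeasurableEquiv.piFinSuccAbove (fun _ => ℝ) 0) ⁻¹' U := by
      ext y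
      simp [hTdef, hUdef, MeasurableEquiv.piFinSuccAbove_apply, Fin.zero_succAbove, Fin.tail]
    rw [hTU, hmp.measure_preimage hU.nullMeasurableSet, Measure.prod_apply hU]
    congr 1 with x
    have : Prod.mk x ⁻¹' U = Set.pi Set.univ fun i : Fin k => Set.Iic x := by
      ext y; simp [hUdef, Set.mem_pi, Pi.le_def]
    rw [this, Measure.pi_pi]
  calc ∏ i : Fin k, P {ω | X i.succ ω ≤ X 0 ω}
      = ∏ i : Fin k, ∫⁻ x, F i x ∂(ν 0) := Finset.prod_congr rfl fun i _ => stepA i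
    _ ≤ ∫⁻ x, ∏ i : Fin k, F i x ∂(ν 0) :=
        my_chebyshev_prod (ν 0) Finset.univ F hFmono hFmeas
    _ = P (⋂ i : Fin k, {ω | X i.succ ω ≤ X 0 ω}) := stepB.symm
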